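/- Let F = GF(2), m = 2sq with s, q ≥ 1, and side information sets A_i = {i mod m, ..., (i+s-1) mod m} for i ∈ ZMod m. Define the code with q codeword vectors x_t = e_{2ts} + e_{(2t-1)s} ∈ F^m for t ∈ [q] (indices mod m). Then for every user i there is exactly one index d_i ∉ A_i such that e_{d_i} lies in the span of {x_t} together with {e_j : j ∈ A_i}; namely, each user can decode exactly one new message. -/

import Mathlib

private lemma pair_exists' {q c : ℕ} (hq : 0 < q) (hc : c < 2 * q) :
    ∃ u, u < q ∧ (c = 2 * u + 1 ∨ c = (2 * u + 2) % (2 * q)) := by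
  rcases Nat.even_or_odd c with ⟨v, hv⟩ | ⟨v, hv⟩
  · rcases Nat.eq_zero_or_pos v with h0 | h0
    · refine ⟨q - 1, by omega, Or.inr ?_⟩
      rw [show 2 * (q - 1) + 2 = 2 * q by omega, Nat.mod_self]; omega
    · refine ⟨v - 1, by omega, Or.inr ?_⟩
      rw [show 2 * (v - 1) + 2 = 2 * v by omega, Nat.mod_eq_of_lt (by omega)]; omega
  · exact ⟨v, by omega, Or.inl (by omega)⟩

private lemma eeval' {q u : ℕ} (hu : u < q) :
    (2 * u + 2) % (2 * q) = if u + 1 = q then 0 else 2 * u + 2 := by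
  split_ifs with h
  · rw [show 2 * u + 2 = 2 * q by omega, Nat.mod_self]
  · exact Nat.mod_eq_of_lt (by omega)

private lemma ee_inj' {q u u' : ℕ} (hu : u < q) (hu' : u' < q)
    (h : (2 * u + 2) % (2 * q) = (2 * u' + 2) % (2 * q)) : u = u' := by
  rw [eeval' hu, eeval' hu'] at h; split_ifs at h <;> omega

private lemma emod2' {q : ℕ} (u : ℕ) : (2 * u + 2) % (2 * q) % 2 = 0 := by
  rw [Nat.mod_mod_of_dvd _ ⟨q, rfl⟩]; omega

private lemma parity_ne' {a b : ℕ} (ha : a % 2 = 0) (hb : b % 2 = 1) : b ≠ a := by omega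

/-- For `m = 2sq`, the GF(2) code with codewords `x t = e_{2ts} + e_{(2t-1)s}` lets every user
decode exactly one message outside its side information set. -/
theorem stmt_7 (s q : ℕ) (hs : 0 < s) (hq : 0 < q) (m : ℕ) (hm : m = 2 * s * q)
    (A : ZMod m → Set (ZMod m))
    (hA : ∀ i, A i = {j | ∃ a : ℕ, a < s ∧ j = i + (a : ZMod m)})
    (x : Fin q → ZMod m → ZMod 2)
    (hx : ∀ t, x t = Pi.single (((2 * (t.val + 1) * s : ℕ)) : ZMod m) 1
        + Pi.single ((((2 * (t.val + 1) - 1) * s : ℕ)) : ZMod m) 1) :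
    ∀ i : ZMod m, ∃! dd : ZMod m, dd ∉ A i ∧
      Pi.single dd (1 : ZMod 2) ∈ Submodule.span (ZMod 2)
        (Set.range x ∪ {v | ∃ j ∈ A i, v = Pi.single j (1 : ZMod 2)}) := by
  intro i
  have hm0 : 0 < m := by rw [hm]; positivity
  haveI : NeZero m := ⟨hm0.ne'⟩
  have hms : m = s * (2 * q) := by rw [hm]; ring
  have hsm : s ∣ m := ⟨2 * q, hms⟩
  -- basic cast facts
  have hmul_lt : ∀ c : ℕ, c < 2 * q → c * s < m := by
    intro c hc
    calc c * s < (2 * q) * s := (Nat.mul_lt_mul_right hs).mpr hc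
    _ = m := by rw [hm]; ring
  have castinj : ∀ c c' : ℕ, c < 2 * q → c' < 2 * q →
      ((((c * s : ℕ)) : ZMod m) = (((c' * s : ℕ)) : ZMod m) ↔ c = c') := by
    intro c c' hc hc'
    constructor
    · intro h
      have h2 := congrArg ZMod.val h
      rw [ZMod.val_natCast_of_lt (hmul_lt c hc), ZMod.val_natCast_of_lt (hmul_lt c' hc')] at h2
      exact Nat.eq_of_mul_eq_mul_right hs h2
    · rintro rfl; rfl
  have valMul : ∀ c : ℕ, s ∣ (((c * s : ℕ)) : ZMod m).val := by
    intro c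
    rw [ZMod.val_natCast]
    exact (Nat.dvd_mod_iff hsm).mpr (dvd_mul_left s c)
  have castRed : ∀ k : ℕ, ((k * s : ℕ) : ZMod m) = (((k % (2 * q)) * s : ℕ) : ZMod m) := by
    intro k
    have h1 : k * s = (k % (2 * q)) * s + (k / (2 * q)) * m := by
      rw [hms]
      conv_lhs => rw [← Nat.mod_add_div k (2 * q)]
      ring
    rw [h1]
    push_cast [ZMod.natCast_self]
    ring
  have ind : ∀ (a : ZMod m) (W : Finset (ZMod m)),
      (∑ j ∈ W, Pi.single a (1 : ZMod 2) j) = if a ∈ W then 1 else 0 := by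
    intro a W
    simp only [Pi.single_apply]
    exact Finset.sum_ite_eq' W a (fun _ => 1)
  -- the unique multiple of s in A i
  set n := i.val with hn
  have hna : ∀ a : ℕ, ((n + a : ℕ) : ZMod m) = i + (a : ZMod m) := by
    intro a
    push_cast
    rw [ZMod.natCast_zmod_val]
  obtain ⟨a0, ha0s, ha0d⟩ : ∃ a, a < s ∧ (n + a) % s = 0 := by
    rcases eq_or_ne (n % s) 0 with h | h
    · exact ⟨0, hs, by simpa using h⟩
    · have hmlt : n % s < s := Nat.mod_lt _ hs
      refine ⟨s - n % s, by omega, ?_⟩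
      rw [Nat.add_mod, Nat.mod_eq_of_lt (by omega : s - n % s < s),
        (by omega : n % s + (s - n % s) = s), Nat.mod_self]
  obtain ⟨k0, hk0q, hk0w⟩ : ∃ k, k < 2 * q ∧ k * s = (n + a0) % m := by
    obtain ⟨k, hk⟩ : s ∣ (n + a0) % m :=
      (Nat.dvd_mod_iff hsm).mpr (Nat.dvd_of_mod_eq_zero ha0d)
    refine ⟨k, ?_, by rw [mul_comm]; exact hk.symm⟩
    have hlt : s * k < s * (2 * q) := by
      rw [← hms, ← hk]; exact Nat.mod_lt _ hm0
    exact lt_of_mul_lt_mul_left hlt (Nat.zero_le s)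
  have memA : ∀ j, j ∈ A i ↔ ∃ a : ℕ, a < s ∧ j = i + (a : ZMod m) := by
    intro j; rw [hA i]; exact Iff.rfl
  have memMul : ∀ c : ℕ, c < 2 * q → ((((c * s : ℕ)) : ZMod m) ∈ A i ↔ c = k0) := by
    intro c hc
    rw [memA]
    constructor
    · rintro ⟨a, has, hae⟩
      have heq : ((c * s : ℕ) : ZMod m) = ((n + a : ℕ) : ZMod m) := by rw [hae, hna]
      have hmod : (c * s) % m = (n + a) % m := (ZMod.natCast_eq_natCast_iff _ _ m).mp heq
      rw [Nat.mod_eq_of_lt (hmul_lt c hc)] at hmod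
      have hsna : s ∣ n + a := by
        refine (Nat.dvd_mod_iff hsm).mp ?_
        rw [← hmod]; exact dvd_mul_left s c
      have hs1 : s ∣ n + a0 := Nat.dvd_of_mod_eq_zero ha0d
      have haa0 : a = a0 := by
        rcases le_total a a0 with hle | hle
        · have hd2 : s ∣ a0 - a := by
            have := Nat.dvd_sub hs1 hsna
            rwa [(by omega : (n + a0) - (n + a) = a0 - a)] at this
          have := Nat.eq_zero_of_dvd_of_lt hd2 (a := s)
          omega
        · have hd2 : s ∣ a - a0 := by
            have := Nat.dvd_sub hsna hs1
            rwa [(by omega : (n + a) - (n + a0) = a - a0)] at this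
          have := Nat.eq_zero_of_dvd_of_lt hd2 (a := s)
          omega
      subst haa0
      exact Nat.eq_of_mul_eq_mul_right hs (hmod.trans hk0w.symm)
    · rintro rfl
      refine ⟨a0, ha0s, ?_⟩
      rw [hk0w, ZMod.natCast_mod, hna]
  -- the pair containing k0
  obtain ⟨u0, hu0q, hu0⟩ := pair_exists' hq hk0q
  obtain ⟨c1, hc1q, hc1k0, hc1pair⟩ : ∃ c1, c1 < 2 * q ∧ c1 ≠ k0 ∧
      ((k0 = 2 * u0 + 1 ∧ c1 = (2 * u0 + 2) % (2 * q)) ∨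
       (k0 = (2 * u0 + 2) % (2 * q) ∧ c1 = 2 * u0 + 1)) := by
    have hp := emod2' (q := q) u0
    rcases eq_or_ne k0 (2 * u0 + 1) with h2 | h2
    · exact ⟨(2 * u0 + 2) % (2 * q), Nat.mod_lt _ (by omega), by omega, Or.inl ⟨h2, rfl⟩⟩
    · rcases hu0 with h | h
      · exact absurd h h2
      · exact ⟨2 * u0 + 1, by omega, by omega, Or.inr ⟨h, rfl⟩⟩
  -- helper algebra facts in GF(2)^m
  have add_self : ∀ v : ZMod m → ZMod 2, v + v = 0 := by
    intro v; funext j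
    have h2 : ∀ z : ZMod 2, z + z = 0 := by decide
    exact h2 (v j)
  have cancel1 : ∀ vE vO : ZMod m → ZMod 2, vE = vE + vO + vO := by
    intro vE vO; rw [add_assoc, add_self, add_zero]
  have cancel2 : ∀ vE vO : ZMod m → ZMod 2, vO = vE + vO + vE := by
    intro vE vO; rw [add_comm vE vO, add_assoc, add_self, add_zero]
  have hxt0 : x ⟨u0, hu0q⟩ =
      Pi.single (((((2 * u0 + 2) % (2 * q)) * s : ℕ)) : ZMod m) 1
      + Pi.single ((((2 * u0 + 1) * s : ℕ)) : ZMod m) 1 := by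
    have e1 : ((2 * (u0 + 1) * s : ℕ) : ZMod m)
        = ((((2 * u0 + 2) % (2 * q)) * s : ℕ) : ZMod m) := by
      rw [show 2 * (u0 + 1) = 2 * u0 + 2 by ring]; exact castRed _
    have e2 : (((2 * (u0 + 1) - 1) * s : ℕ) : ZMod m) = (((2 * u0 + 1) * s : ℕ) : ZMod m) := by
      rw [show 2 * (u0 + 1) - 1 = 2 * u0 + 1 by omega]
    rw [hx ⟨u0, hu0q⟩]
    rw [e1, e2]
  refine ⟨(((c1 * s : ℕ)) : ZMod m), ⟨?_, ?_⟩, ?_⟩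
  · intro hmem
    exact hc1k0 ((memMul c1 hc1q).mp hmem)
  · -- decodability of dd
    have hsingle_eq : Pi.single (((c1 * s : ℕ)) : ZMod m) (1 : ZMod 2)
        = x ⟨u0, hu0q⟩ + Pi.single (((k0 * s : ℕ)) : ZMod m) 1 := by
      rcases hc1pair with ⟨h1, h2⟩ | ⟨h1, h2⟩
      · rw [h1, h2, hxt0]; exact cancel1 _ _
      · rw [h1, h2, hxt0]; exact cancel2 _ _
    rw [hsingle_eq]
    refine Submodule.add_mem _ ?_ ?_
    · exact Submodule.subset_span (Set.mem_union_left _ ⟨⟨u0, hu0q⟩, rfl⟩)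
    · exact Submodule.subset_span
        (Set.mem_union_right _ ⟨(((k0 * s : ℕ)) : ZMod m), (memMul k0 hk0q).mpr rfl, rfl⟩)
  · -- uniqueness
    rintro d ⟨hdA, hdspan⟩
    by_contra hne
    -- parity-check contradiction machinery
    have key : ∀ W : Finset (ZMod m), d ∈ W → (∀ j ∈ A i, j ∉ W) →
        (∀ t : Fin q, (∑ j ∈ W, x t j) = 0) → False := by
      intro W hdW hAW hxW
      set K : Submodule (ZMod 2) (ZMod m → ZMod 2) :=
        { carrier := {v | (∑ j ∈ W, v j) = 0}
          add_mem' := fun {a b} ha hb => by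
            simp only [Set.mem_setOf_eq, Pi.add_apply, Finset.sum_add_distrib] at *
            rw [ha, hb, add_zero]
          zero_mem' := by simp
          smul_mem' := fun c v hv => by
            simp only [Set.mem_setOf_eq, Pi.smul_apply, smul_eq_mul, ← Finset.mul_sum] at *
            rw [hv, mul_zero] } with hK
      have hsub : (Set.range x ∪ {v | ∃ j ∈ A i, v = Pi.single j (1 : ZMod 2)}) ⊆ ↑K := by
        rintro v (⟨t, rfl⟩ | ⟨j, hj, rfl⟩)
        · exact hxW t
        · show (∑ jj ∈ W, Pi.single j (1 : ZMod 2) jj) = 0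
          rw [ind j W, if_neg (hAW j hj)]
      have hmem : Pi.single d (1 : ZMod 2) ∈ K := Submodule.span_le.mpr hsub hdspan
      have h2 : (∑ j ∈ W, Pi.single d (1 : ZMod 2) j) = 0 := hmem
      rw [ind d W, if_pos hdW] at h2
      exact one_ne_zero h2
    rcases Decidable.em (s ∣ d.val) with hsd | hsd
    · -- d is a multiple of s
      obtain ⟨c, hcdef⟩ := hsd
      have hcs : c * s = d.val := by rw [mul_comm]; exact hcdef.symm
      have hcq : c < 2 * q := by
        have hlt : c * s < m := by rw [hcs]; exact ZMod.val_lt d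
        by_contra hcontra
        push_neg at hcontra
        have : (2 * q) * s ≤ c * s := Nat.mul_le_mul_right s hcontra
        have h2qs : (2 * q) * s = m := by rw [hm]; ring
        omega
      have hdc : d = (((c * s : ℕ)) : ZMod m) := by rw [hcs, ZMod.natCast_zmod_val]
      have hck0 : c ≠ k0 := by
        intro h
        exact hdA (hdc ▸ (memMul c hcq).mpr h)
      obtain ⟨u1, hu1q, hu1⟩ := pair_exists' hq hcq
      obtain ⟨p, hpq, hset⟩ : ∃ p, p < 2 * q ∧
          ((c = 2 * u1 + 1 ∧ p = (2 * u1 + 2) % (2 * q)) ∨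
           (c = (2 * u1 + 2) % (2 * q) ∧ p = 2 * u1 + 1)) := by
        rcases eq_or_ne c (2 * u1 + 1) with h2 | h2
        · exact ⟨(2 * u1 + 2) % (2 * q), Nat.mod_lt _ (by omega), Or.inl ⟨h2, rfl⟩⟩
        · rcases hu1 with h | h
          · exact absurd h h2
          · exact ⟨2 * u1 + 1, by omega, Or.inr ⟨h, rfl⟩⟩
      have hcp : c ≠ p := by
        have hp2 := emod2' (q := q) u1
        rcases hset with ⟨h1, h2⟩ | ⟨h1, h2⟩ <;> omega
      have hpk0 : p ≠ k0 := by
        intro hpk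
        apply hne
        rw [hdc, castinj c c1 hcq hc1q]
        have hp2u0 := emod2' (q := q) u0
        have hp2u1 := emod2' (q := q) u1
        rcases hset with ⟨h1, h2⟩ | ⟨h1, h2⟩
        · -- c odd, p = ee u1 = k0, so k0 even: k0 = ee u0, c1 = 2u0+1
          rcases hc1pair with ⟨g1, g2⟩ | ⟨g1, g2⟩
          · omega
          · have hu : u1 = u0 := ee_inj' hu1q hu0q (by omega)
            omega
        · -- c = ee u1, p = 2u1+1 = k0 odd: k0 = 2u0+1, c1 = ee u0
          rcases hc1pair with ⟨g1, g2⟩ | ⟨g1, g2⟩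
          · have hu : u1 = u0 := by omega
            rw [h1, g2, hu]
          · omega
      -- the parity-check set W = {d, P}
      set P : ZMod m := (((p * s : ℕ)) : ZMod m) with hP
      have hdP : d ≠ P := by
        rw [hdc, hP, Ne, castinj c p hcq hpq]
        exact hcp
      have memW : ∀ z : ℕ, z < 2 * q →
          ((((z * s : ℕ)) : ZMod m) ∈ ({d, P} : Finset (ZMod m)) ↔
            (z = 2 * u1 + 1 ∨ z = (2 * u1 + 2) % (2 * q))) := by
        intro z hz
        rw [Finset.mem_insert, Finset.mem_singleton, hdc, hP,
          castinj z c hz hcq, castinj z p hz hpq]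
        rcases hset with ⟨h1, h2⟩ | ⟨h1, h2⟩
        · rw [h1, h2]
        · rw [h1, h2]; exact or_comm
      refine key {d, P} (Finset.mem_insert_self d _) ?_ ?_
      · intro j hj
        rw [Finset.mem_insert, Finset.mem_singleton]
        rintro (rfl | rfl)
        · exact hdA hj
        · exact hpk0 ((memMul p hpq).mp hj)
      · intro t
        have htq : t.val < q := t.isLt
        have e1 : ((2 * (t.val + 1) * s : ℕ) : ZMod m)
            = ((((2 * t.val + 2) % (2 * q)) * s : ℕ) : ZMod m) := by
          rw [show 2 * (t.val + 1) = 2 * t.val + 2 by ring]; exact castRed _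
        have e2 : (((2 * (t.val + 1) - 1) * s : ℕ) : ZMod m)
            = (((2 * t.val + 1) * s : ℕ) : ZMod m) := by
          rw [show 2 * (t.val + 1) - 1 = 2 * t.val + 1 by omega]
        rw [hx t, e1, e2]
        simp only [Pi.add_apply]
        rw [Finset.sum_add_distrib, ind, ind]
        have hεq : (2 * t.val + 2) % (2 * q) < 2 * q := Nat.mod_lt _ (by omega)
        have hmemE := memW _ hεq
        have hmemO := memW _ (by omega : 2 * t.val + 1 < 2 * q)
        have hparE := emod2' (q := q) t.val
        have hpar1 := emod2' (q := q) u1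
        have hEW : ((((2 * t.val + 2) % (2 * q)) * s : ℕ) : ZMod m) ∈ ({d, P} : Finset (ZMod m))
            ↔ t.val = u1 := by
          rw [hmemE]
          constructor
          · rintro (h' | h')
            · omega
            · exact ee_inj' htq hu1q h'
          · intro h; exact Or.inr (by rw [h])
        have hOW : (((2 * t.val + 1) * s : ℕ) : ZMod m) ∈ ({d, P} : Finset (ZMod m))
            ↔ t.val = u1 := by
          rw [hmemO]
          constructor
          · rintro (h' | h')
            · omega
            · omega
          · intro h; exact Or.inl (by omega)
        rcases eq_or_ne t.val u1 with h | h
        · rw [if_pos (hEW.mpr h), if_pos (hOW.mpr h)]; decide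
        · rw [if_neg (fun hh => h (hEW.mp hh)), if_neg (fun hh => h (hOW.mp hh)), add_zero]
    · -- d is not a multiple of s
      refine key {d} (Finset.mem_singleton_self d) ?_ ?_
      · intro j hj
        rw [Finset.mem_singleton]
        intro h
        exact hdA (h ▸ hj)
      · intro t
        rw [Finset.sum_singleton, hx t]
        have hE : (((2 * (t.val + 1) * s : ℕ)) : ZMod m) ≠ d := by
          intro h; exact hsd (h ▸ valMul _)
        have hO : ((((2 * (t.val + 1) - 1) * s : ℕ)) : ZMod m) ≠ d := by
          intro h; exact hsd (h ▸ valMul _)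
        simp only [Pi.add_apply]
        rw [Pi.single_apply, Pi.single_apply, if_neg (Ne.symm hE), if_neg (Ne.symm hO), add_zero]
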